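/- Let R be a Noetherian ring, I ⊂ R an ideal, and f ∈ R an element such that I^j : f = I^j for all j ≥ 0. Then there exists an integer k > 0 such that (C(I), f^k) ⊆ C((I, f)), where (I, f) denotes I + (f) and (C(I), f^k) denotes C(I) + (f^k). In particular, if I is of linear type (C(I) = R), then (I, f) is of linear type. -/

import Mathlib

noncomputable section

universe u v

/-- The `R`-algebra map `φ : T = R[y_i : i ∈ ι] → R[t]` sending `y_i ↦ f i · t`. -/
def reesHom {R : Type u} [CommRing R] {ι : Type v} (f : ι → R) :
    MvPolynomial ι R →ₐ[R] Polynomial R :=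
  MvPolynomial.aeval fun i => Polynomial.C (f i) * Polynomial.X

/-- `J`, the defining ideal of the Rees algebra of the ideal generated by `f`. -/
def reesJ {R : Type u} [CommRing R] {ι : Type v} (f : ι → R) :
    Ideal (MvPolynomial ι R) :=
  RingHom.ker (reesHom f)

/-- `L`, the ideal of `T` generated by the linear relations `∑ aᵢ yᵢ` with `∑ aᵢ fᵢ = 0`. -/
def linRel {R : Type u} [CommRing R] {ι : Type v} (f : ι → R) :
    Ideal (MvPolynomial ι R) :=
  Ideal.span {p | ∃ a : ι →₀ R, (a.sum fun i r => r * f i) = 0 ∧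
    p = a.sum fun i r => MvPolynomial.C r * MvPolynomial.X i}

/-- The conductor `C(I) = L :_R J = {r ∈ R : r J ⊆ L}`. -/
def conductorIdeal {R : Type u} [CommRing R] {ι : Type v} (f : ι → R) : Ideal R :=
  Submodule.colon (Submodule.restrictScalars R (linRel f))
    (Submodule.restrictScalars R (reesJ f))

/-- The ideal generated by `f` is of linear type if `J = L`. -/
def IsLinearType {R : Type u} [CommRing R] {ι : Type v} (f : ι → R) : Prop :=
  reesJ f = linRel f

end

noncomputable section Aux

open MvPolynomial

variable {R : Type} [CommRing R] {m : ℕ}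

/-- basic computation -/
lemma reesHom_X {ι : Type} (f : ι → R) (i : ι) :
    reesHom f (X i) = Polynomial.C (f i) * Polynomial.X := by
  simp [reesHom]

lemma reesHom_C {ι : Type} (f : ι → R) (a : R) :
    reesHom f (C a) = Polynomial.C a := by
  simp [reesHom]

/-- generators of linRel -/
lemma mem_linRel_of_rel {ι : Type} (f : ι → R) (a : ι →₀ R)
    (h : (a.sum fun i r => r * f i) = 0) :
    (a.sum fun i r => C r * X i) ∈ linRel f :=
  Ideal.subset_span ⟨a, h, rfl⟩

lemma linRel_le_reesJ {ι : Type} (f : ι → R) : linRel f ≤ reesJ f := by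
  rw [linRel, Ideal.span_le]
  rintro p ⟨a, ha, rfl⟩
  have : (reesHom f) (a.sum fun i r => C r * X i)
      = Polynomial.C (a.sum fun i r => r * f i) * Polynomial.X := by
    rw [map_finsuppSum]
    rw [Finsupp.sum, Finsupp.sum, map_sum, Finset.sum_mul]
    refine Finset.sum_congr rfl fun i _ => ?_
    rw [map_mul, reesHom_C, reesHom_X, map_mul]
    ring
  simp only [SetLike.mem_coe, reesJ, RingHom.mem_ker]
  rw [this, ha]
  simp

lemma coeff_reesHom_mem (f : Fin m → R) {I : Ideal R} (hI : I = Ideal.span (Set.range f))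
    (H : MvPolynomial (Fin m) R) (n : ℕ) : (reesHom f H).coeff n ∈ I ^ n := by
  induction H using MvPolynomial.induction_on generalizing n with
  | C a =>
      rcases n with _ | n
      · simp [Ideal.one_eq_top]
      · simp [reesHom_C, Polynomial.coeff_C]
  | add p q hp hq => rw [map_add, Polynomial.coeff_add]; exact Ideal.add_mem _ (hp n) (hq n)
  | mul_X p i hp =>
      have hrw : reesHom f (p * X i) = (Polynomial.C (f i) * reesHom f p) * Polynomial.X := by
        rw [map_mul, reesHom_X]; ring
      rcases n with _ | n
      · rw [hrw, Polynomial.coeff_mul_X_zero]; exact zero_mem _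
      · rw [hrw, Polynomial.coeff_mul_X, Polynomial.coeff_C_mul, pow_succ']
        exact Ideal.mul_mem_mul (hI ▸ Ideal.subset_span ⟨i, rfl⟩) (hp n)

lemma finRotate_castSucc (j : Fin m) :
    finRotate (m + 1) j.castSucc = j.succ := by
  have h := finRotate_of_lt (n := m) (k := j.val) j.isLt
  apply Fin.ext
  simpa using congrArg Fin.val h

variable (R) in
/-- The equivalence `T1 ≃ (MvPolynomial (Fin m) R)[X]` isolating the last variable. -/
def lastEquiv (m : ℕ) :
    MvPolynomial (Fin (m + 1)) R ≃ₐ[R] Polynomial (MvPolynomial (Fin m) R) :=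
  (renameEquiv R (finRotate (m + 1))).trans (finSuccEquiv R m)

lemma lastEquiv_X_last :
    lastEquiv R m (X (Fin.last m)) = Polynomial.X := by
  simp [lastEquiv, finRotate_last, finSuccEquiv_X_zero]

lemma lastEquiv_X_castSucc (j : Fin m) :
    lastEquiv R m (X j.castSucc) = Polynomial.C (X j) := by
  simp [lastEquiv, finRotate_castSucc, finSuccEquiv_X_succ]

lemma lastEquiv_rename (p : MvPolynomial (Fin m) R) :
    lastEquiv R m (rename Fin.castSucc p) = Polynomial.C p := by
  have h : ((lastEquiv R m).toAlgHom.comp (rename (Fin.castSucc : Fin m → Fin (m + 1))) :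
      MvPolynomial (Fin m) R →ₐ[R] Polynomial (MvPolynomial (Fin m) R))
      = ((Polynomial.CAlgHom (R := MvPolynomial (Fin m) R)).restrictScalars R) := by
    apply MvPolynomial.algHom_ext
    intro j
    simp [lastEquiv_X_castSucc, Polynomial.CAlgHom]
  exact congrArg (fun (F : MvPolynomial (Fin m) R →ₐ[R] _) => F p) h

lemma lastEquiv_C (a : R) :
    lastEquiv R m (C a) = Polynomial.C (C a) := by
  have := lastEquiv_rename (R := R) (m := m) (C a)
  rwa [rename_C] at this

lemma lastEquiv_symm_C (p : MvPolynomial (Fin m) R) :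
    (lastEquiv R m).symm (Polynomial.C p) = rename Fin.castSucc p := by
  rw [← lastEquiv_rename, AlgEquiv.symm_apply_apply]

lemma lastEquiv_symm_X :
    (lastEquiv R m).symm Polynomial.X = X (Fin.last m) := by
  rw [← lastEquiv_X_last, AlgEquiv.symm_apply_apply]

variable (f : Fin m → R) (g : R)

/-- `χ : T[X] → R[X]`, evaluation `X ↦ C g * X` over `reesHom f`. -/
def chiHom : Polynomial (MvPolynomial (Fin m) R) →+* Polynomial R :=
  Polynomial.eval₂RingHom (reesHom f : MvPolynomial (Fin m) R →+* Polynomial R)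
    (Polynomial.C g * Polynomial.X)

lemma chiHom_C (p : MvPolynomial (Fin m) R) : chiHom f g (Polynomial.C p) = reesHom f p := by
  simp [chiHom]

lemma chiHom_X : chiHom f g Polynomial.X = Polynomial.C g * Polynomial.X := by
  simp [chiHom]

lemma chiHom_lastEquiv (F : MvPolynomial (Fin (m + 1)) R) :
    chiHom f g (lastEquiv R m F) = reesHom (Fin.snoc f g) F := by
  have h : (chiHom f g).comp (((lastEquiv R m).toAlgHom : MvPolynomial (Fin (m+1)) R →ₐ[R] _) :
      MvPolynomial (Fin (m+1)) R →+* _)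
      = (reesHom (Fin.snoc f g) : MvPolynomial (Fin (m+1)) R →+* Polynomial R) := by
    apply MvPolynomial.ringHom_ext
    · intro a
      simp [lastEquiv_C, chiHom_C, reesHom_C]
    · intro i
      induction i using Fin.lastCases with
      | last =>
          simp [lastEquiv_X_last, chiHom_X, reesHom_X, Fin.snoc_last]
      | cast j =>
          simp [lastEquiv_X_castSucc, chiHom_C, reesHom_X, Fin.snoc_castSucc]
  exact congrFun (congrArg DFunLike.coe h) F

variable {I : Ideal R}

lemma lift0 (hI : I = Ideal.span (Set.range f)) :
    ∀ (n : ℕ) (c : R), c ∈ I ^ n →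
      ∃ B : MvPolynomial (Fin m) R, reesHom f B = Polynomial.C c * Polynomial.X ^ n := by
  intro n
  induction n with
  | zero => intro c _; exact ⟨C c, by simp [reesHom_C]⟩
  | succ n ih =>
      intro c hc
      rw [pow_succ, hI] at hc
      refine Submodule.mul_induction_on hc ?_ ?_
      · intro a ha b hb
        obtain ⟨B, hB⟩ := ih a (hI ▸ ha)
        induction hb using Submodule.span_induction with
        | mem x hx =>
            obtain ⟨i, rfl⟩ := hx
            exact ⟨B * X i, by rw [map_mul, hB, reesHom_X]; simp only [Polynomial.C_mul]; ring⟩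
        | zero => exact ⟨0, by simp⟩
        | add x y _ _ hx hy =>
            obtain ⟨Bx, hBx⟩ := hx; obtain ⟨By, hBy⟩ := hy
            exact ⟨Bx + By, by rw [map_add, hBx, hBy, mul_add, map_add, add_mul]⟩
        | smul r x _ hx =>
            obtain ⟨Bx, hBx⟩ := hx
            refine ⟨C r * Bx, ?_⟩
            rw [map_mul, reesHom_C, hBx, smul_eq_mul, map_mul]
            simp only [Polynomial.C_mul]; ring
      · intro x y hx hy
        obtain ⟨Bx, hBx⟩ := hx; obtain ⟨By, hBy⟩ := hy
        exact ⟨Bx + By, by rw [map_add, hBx, hBy, map_add, add_mul]⟩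

lemma lift1 (hI : I = Ideal.span (Set.range f)) :
    ∀ (n : ℕ) (c : R), c ∈ I ^ (n + 1) →
      ∃ E : Fin m → MvPolynomial (Fin m) R,
        reesHom f (∑ i, C (f i) * E i) = Polynomial.C c * Polynomial.X ^ n := by
  have hadd : ∀ (x y : R) (n : ℕ),
      (∃ E : Fin m → MvPolynomial (Fin m) R,
        reesHom f (∑ i, C (f i) * E i) = Polynomial.C x * Polynomial.X ^ n) →
      (∃ E : Fin m → MvPolynomial (Fin m) R,
        reesHom f (∑ i, C (f i) * E i) = Polynomial.C y * Polynomial.X ^ n) →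
      ∃ E : Fin m → MvPolynomial (Fin m) R,
        reesHom f (∑ i, C (f i) * E i) = Polynomial.C (x + y) * Polynomial.X ^ n := by
    rintro x y n ⟨Ex, hEx⟩ ⟨Ey, hEy⟩
    refine ⟨fun i => Ex i + Ey i, ?_⟩
    have h : (∑ i, C (f i) * (Ex i + Ey i))
        = (∑ i, C (f i) * Ex i) + ∑ i, C (f i) * Ey i := by
      rw [← Finset.sum_add_distrib]; exact Finset.sum_congr rfl fun i _ => by ring
    rw [h, map_add, hEx, hEy, map_add, add_mul]
  intro n c hc
  rw [pow_succ, hI] at hc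
  refine Submodule.mul_induction_on hc ?_ (fun x y hx hy => hadd x y n hx hy)
  intro a ha b hb
  obtain ⟨B, hB⟩ := lift0 f hI n a (hI ▸ ha)
  induction hb using Submodule.span_induction with
  | mem x hx =>
      obtain ⟨i₀, rfl⟩ := hx
      refine ⟨fun i => if i = i₀ then B else 0, ?_⟩
      simp only [mul_ite, mul_zero]
      rw [Finset.sum_ite_eq' Finset.univ i₀ fun i => C (f i) * B]
      simp only [Finset.mem_univ, if_true]
      rw [map_mul, reesHom_C, hB]
      simp only [Polynomial.C_mul]; ring
  | zero => exact ⟨fun _ => 0, by simp⟩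
  | add x y _ _ hx hy => exact mul_add a x y ▸ hadd _ _ n hx hy
  | smul r x _ hx =>
      obtain ⟨Ex, hEx⟩ := hx
      refine ⟨fun i => C r * Ex i, ?_⟩
      have h : (∑ i, C (f i) * (C r * Ex i)) = C r * ∑ i, C (f i) * Ex i := by
        rw [Finset.mul_sum]; exact Finset.sum_congr rfl fun i _ => by ring
      rw [h, map_mul, reesHom_C, hEx, smul_eq_mul, map_mul]
      simp only [Polynomial.C_mul]; ring

lemma liftP (hI : I = Ideal.span (Set.range f)) (p : Polynomial R)
    (hp : ∀ j : ℕ, p.coeff j ∈ I ^ (j + 1)) :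
    ∃ E : Fin m → MvPolynomial (Fin m) R,
      reesHom f (∑ i, C (f i) * E i) = p := by
  have hch : ∀ j : ℕ, ∃ E : Fin m → MvPolynomial (Fin m) R,
      reesHom f (∑ i, C (f i) * E i) = Polynomial.C (p.coeff j) * Polynomial.X ^ j :=
    fun j => lift1 f hI j (p.coeff j) (hp j)
  choose Ef hEf using hch
  refine ⟨fun i => ∑ j ∈ p.support, Ef j i, ?_⟩
  have h1 : (∑ i, C (f i) * ∑ j ∈ p.support, Ef j i)
      = ∑ j ∈ p.support, ∑ i, C (f i) * Ef j i := by
    rw [Finset.sum_comm]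
    exact Finset.sum_congr rfl fun i _ => by rw [Finset.mul_sum]
  rw [h1, map_sum]
  calc (∑ j ∈ p.support, reesHom f (∑ i, C (f i) * Ef j i))
      = ∑ j ∈ p.support, Polynomial.C (p.coeff j) * Polynomial.X ^ j :=
        Finset.sum_congr rfl fun j _ => hEf j
    _ = p := by
        conv_rhs => rw [p.as_sum_support]
        exact Finset.sum_congr rfl fun j _ => Polynomial.C_mul_X_pow_eq_monomial

/-- The relation `g·yᵢ - fᵢ·z` (written for arbitrary index, trivial at `z`). -/
lemma relG (i : Fin (m + 1)) :
    (C g : MvPolynomial (Fin (m+1)) R) * X i - C ((Fin.snoc f g : Fin (m+1) → R) i) * X (Fin.last m)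
      ∈ linRel (Fin.snoc f g) := by
  induction i using Fin.lastCases with
  | last => simp [Fin.snoc_last]
  | cast j =>
      have hne : j.castSucc ≠ Fin.last m := Fin.ne_last_of_lt (Fin.castSucc_lt_last j)
      have h := mem_linRel_of_rel (Fin.snoc f g)
        (Finsupp.single j.castSucc g - Finsupp.single (Fin.last m) (f j)) ?_
      · have hsum : ((Finsupp.single j.castSucc g - Finsupp.single (Fin.last m) (f j)).sum
            fun i r => C r * X i)
            = C g * X j.castSucc - C (f j) * X (Fin.last m) := by
          rw [Finsupp.sum_sub_index (by intro i b₁ b₂; rw [map_sub, sub_mul])]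
          rw [Finsupp.sum_single_index (by simp), Finsupp.sum_single_index (by simp)]
        rw [hsum] at h
        rwa [Fin.snoc_castSucc]
      · rw [Finsupp.sum_sub_index (by intro i b₁ b₂; rw [sub_mul])]
        rw [Finsupp.sum_single_index (by simp), Finsupp.sum_single_index (by simp)]
        rw [Fin.snoc_castSucc, Fin.snoc_last]
        ring

/-- The relation `a·z` when `a·g = 0`. -/
lemma relZ (a : R) (ha : a * g = 0) :
    C a * X (Fin.last m) ∈ linRel (Fin.snoc f g) := by
  have h := mem_linRel_of_rel (Fin.snoc f g) (Finsupp.single (Fin.last m) a) ?_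
  · rwa [Finsupp.sum_single_index (by simp)] at h
  · rw [Finsupp.sum_single_index (by simp), Fin.snoc_last]
    exact ha

lemma rename_mem_linRel {p : MvPolynomial (Fin m) R} (hp : p ∈ linRel f) :
    rename Fin.castSucc p ∈ linRel (Fin.snoc f g) := by
  have hmap : Ideal.map (rename (Fin.castSucc : Fin m → Fin (m+1)) :
      MvPolynomial (Fin m) R →ₐ[R] MvPolynomial (Fin (m+1)) R) (linRel f)
      ≤ linRel (Fin.snoc f g) := by
    rw [linRel, Ideal.map_span, Ideal.span_le]
    rintro q ⟨p', ⟨a, ha, rfl⟩, rfl⟩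
    have h1 : (rename (Fin.castSucc : Fin m → Fin (m+1)) :
        MvPolynomial (Fin m) R →ₐ[R] MvPolynomial (Fin (m+1)) R)
        (a.sum fun i r => C r * X i)
        = ((a.embDomain ⟨Fin.castSucc, Fin.castSucc_injective m⟩).sum
            fun i r => C r * X i) := by
      rw [Finsupp.sum_embDomain, map_finsuppSum]
      exact Finsupp.sum_congr fun i _ => by simp
    refine SetLike.mem_coe.mpr ?_
    rw [show ((rename (Fin.castSucc : Fin m → Fin (m+1)) :
        MvPolynomial (Fin m) R →ₐ[R] MvPolynomial (Fin (m+1)) R)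
        (a.sum fun i r => C r * X i)) = _ from h1]
    refine mem_linRel_of_rel _ _ ?_
    rw [Finsupp.sum_embDomain]
    rw [← ha]
    exact Finsupp.sum_congr fun i _ => by simp [Fin.snoc_castSucc]
  exact hmap (Ideal.mem_map_of_mem _ hp)

lemma reesHom_rename (p : MvPolynomial (Fin m) R) :
    reesHom (Fin.snoc f g) (rename Fin.castSucc p) = reesHom f p := by
  have h : ((reesHom (Fin.snoc f g)).comp
      (rename (Fin.castSucc : Fin m → Fin (m+1)) : MvPolynomial (Fin m) R →ₐ[R] _))
      = reesHom f := by
    apply MvPolynomial.algHom_ext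
    intro j
    simp [reesHom_X, Fin.snoc_castSucc]
  exact congrFun (congrArg DFunLike.coe h) p

lemma divX_natDegree_lt {S : Type} [CommRing S] {q : Polynomial S} (hq : q.divX ≠ 0) :
    q.divX.natDegree < q.natDegree := by
  rcases Nat.eq_zero_or_pos q.natDegree with h0 | hpos
  · exfalso
    apply hq
    rw [Polynomial.divX_eq_zero_iff]
    exact Polynomial.eq_C_of_natDegree_eq_zero h0
  · calc q.divX.natDegree = q.natDegree - 1 :=
          Polynomial.natDegree_divX_eq_natDegree_tsub_one
    _ < q.natDegree := by omega

/-- **Main Lemma A**: if `r` multiplies `J(f)` into `L(f)` then it multiplies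
`J(f,g)` into `L(f,g)`, assuming `Iʲ : g = Iʲ`. -/
lemma mainA (hI : I = Ideal.span (Set.range f))
    (hreg : ∀ j : ℕ, (I ^ j).colon (Ideal.span {g}) = I ^ j)
    (r : R) (hr : ∀ p, p ∈ reesJ f → C r * p ∈ linRel f) :
    ∀ F, F ∈ reesJ (Fin.snoc f g) → C r * F ∈ linRel (Fin.snoc f g) := by
  suffices H : ∀ (n : ℕ) (q : Polynomial (MvPolynomial (Fin m) R)), q.natDegree ≤ n →
      chiHom f g q = 0 → C r * (lastEquiv R m).symm q ∈ linRel (Fin.snoc f g) by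
    intro F hF
    have h1 : chiHom f g (lastEquiv R m F) = 0 := by
      rw [chiHom_lastEquiv]
      exact hF
    have := H (lastEquiv R m F).natDegree (lastEquiv R m F) le_rfl h1
    rwa [AlgEquiv.symm_apply_apply] at this
  intro n
  induction n using Nat.strong_induction_on with
  | _ n IH =>
  intro q hdeg hq
  by_cases hq' : q.divX = 0
  · -- `q` is a constant in `z`
    have hqC : q = Polynomial.C (q.coeff 0) := Polynomial.divX_eq_zero_iff.mp hq'
    rw [hqC, lastEquiv_symm_C]
    have hker : q.coeff 0 ∈ reesJ f := by
      have : chiHom f g (Polynomial.C (q.coeff 0)) = 0 := by rw [← hqC]; exact hq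
      rwa [chiHom_C] at this
    have := hr _ hker
    have h2 := rename_mem_linRel f g this
    rwa [map_mul, rename_C] at h2
  · -- main inductive step
    set q' := q.divX with hq'def
    set q₀ := q.coeff 0 with hq₀def
    have hsplit : Polynomial.X * q' + Polynomial.C q₀ = q := Polynomial.X_mul_divX_add q
    have hchi : (Polynomial.C g * Polynomial.X) * chiHom f g q' + reesHom f q₀ = 0 := by
      have : chiHom f g (Polynomial.X * q' + Polynomial.C q₀) = 0 := by rw [hsplit]; exact hq
      rw [map_add, map_mul, chiHom_X, chiHom_C] at this
      exact this
    set p' := chiHom f g q' with hp'def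
    have hcoeff : ∀ j : ℕ, p'.coeff j ∈ I ^ (j + 1) := by
      intro j
      have h1 : (reesHom f q₀).coeff (j + 1) = -(g * p'.coeff j) := by
        have := congrArg (fun u => Polynomial.coeff u (j + 1)) hchi
        simp only [Polynomial.coeff_add, Polynomial.coeff_zero] at this
        have h2 : ((Polynomial.C g * Polynomial.X) * p').coeff (j + 1) = g * p'.coeff j := by
          rw [show (Polynomial.C g * Polynomial.X) * p' = (Polynomial.C g * p') * Polynomial.X
            by ring, Polynomial.coeff_mul_X, Polynomial.coeff_C_mul]
        rw [h2] at this
        linear_combination this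
      have h3 : g * p'.coeff j ∈ I ^ (j + 1) := by
        have := coeff_reesHom_mem f hI q₀ (j + 1)
        rw [h1] at this
        simpa using (neg_mem_iff.mp (by simpa using this) : _)
      rw [← hreg (j + 1)]
      exact Submodule.mem_colon_span_singleton.mpr (by rw [smul_eq_mul, mul_comm]; exact h3)
    obtain ⟨Efun, hEfun⟩ := liftP f hI p' hcoeff
    set W : MvPolynomial (Fin m) R := ∑ i, C (f i) * Efun i with hWdef
    set E : MvPolynomial (Fin m) R := ∑ i, X i * Efun i with hEdef
    have hΦE : reesHom f E = Polynomial.X * p' := by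
      rw [hEdef, map_sum]
      have h4 : ∀ i, reesHom f (X i * Efun i)
          = Polynomial.X * (Polynomial.C (f i) * reesHom f (Efun i)) := by
        intro i; rw [map_mul, reesHom_X]; ring
      rw [Finset.sum_congr rfl fun i _ => h4 i, ← Finset.mul_sum]
      congr 1
      rw [← hEfun, hWdef, map_sum]
      exact Finset.sum_congr rfl fun i _ => by rw [map_mul, reesHom_C]
    -- first piece : q₀ + C g * E ∈ reesJ f
    have h5 : q₀ + C g * E ∈ reesJ f := by
      simp only [reesJ, RingHom.mem_ker]
      rw [map_add, map_mul, reesHom_C, hΦE]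
      calc reesHom f q₀ + Polynomial.C g * (Polynomial.X * p')
          = (Polynomial.C g * Polynomial.X) * p' + reesHom f q₀ := by ring
        _ = 0 := hchi
    have hA1 : rename Fin.castSucc (C r * (q₀ + C g * E)) ∈ linRel (Fin.snoc f g) :=
      rename_mem_linRel f g (hr _ h5)
    -- second piece : the mixed linear relation sum
    have hA2 : (∑ i, rename (Fin.castSucc : Fin m → Fin (m+1)) (Efun i) *
        ((C g : MvPolynomial (Fin (m+1)) R) * X i.castSucc
          - C (f i) * X (Fin.last m))) ∈ linRel (Fin.snoc f g) := by
      refine Ideal.sum_mem _ fun i _ => Ideal.mul_mem_left _ _ ?_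
      have := relG f g i.castSucc
      rwa [Fin.snoc_castSucc] at this
    have hA2eq : (∑ i, rename (Fin.castSucc : Fin m → Fin (m+1)) (Efun i) *
        ((C g : MvPolynomial (Fin (m+1)) R) * X i.castSucc
          - C (f i) * X (Fin.last m)))
        = C g * rename Fin.castSucc E - X (Fin.last m) * rename Fin.castSucc W := by
      rw [hEdef, hWdef, map_sum, map_sum, Finset.mul_sum, Finset.mul_sum,
        ← Finset.sum_sub_distrib]
      refine Finset.sum_congr rfl fun i _ => ?_
      rw [map_mul, map_mul, rename_X, rename_C]
      ring
    -- third piece : induction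
    have hdeg' : q'.natDegree < n := lt_of_lt_of_le (divX_natDegree_lt hq') hdeg
    have h6 : chiHom f g (q' - Polynomial.C W) = 0 := by
      rw [map_sub, chiHom_C, ← hp'def]
      rw [sub_eq_zero]
      rw [← hEfun]
    have h7 : (q' - Polynomial.C W).natDegree ≤ q'.natDegree := by
      refine le_trans (Polynomial.natDegree_sub_le _ _) ?_
      simp [Polynomial.natDegree_C]
    have hA3 : C r * (lastEquiv R m).symm (q' - Polynomial.C W) ∈ linRel (Fin.snoc f g) :=
      IH q'.natDegree hdeg' _ h7 h6
    -- assemble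
    have hfinal : C r * (lastEquiv R m).symm q
        = rename Fin.castSucc (C r * (q₀ + C g * E))
          - C r * (C g * rename Fin.castSucc E - X (Fin.last m) * rename Fin.castSucc W)
          + X (Fin.last m) * (C r * (lastEquiv R m).symm (q' - Polynomial.C W)) := by
      conv_lhs => rw [← hsplit]
      simp only [map_add, map_mul, map_sub, lastEquiv_symm_X, lastEquiv_symm_C, rename_C]
      ring
    rw [hfinal, ← hA2eq]
    refine Ideal.add_mem _ (Ideal.sub_mem _ hA1 (Ideal.mul_mem_left _ _ hA2))
      (Ideal.mul_mem_left _ _ hA3)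

/-- Every `F` can be reduced modulo `linRel (f,g)` (after multiplying by a power of `g`)
to a polynomial in `z` with constant coefficients. -/
lemma reduceB : ∀ F : MvPolynomial (Fin (m + 1)) R, ∃ (k : ℕ) (p : Polynomial R),
    C (g ^ k) * F - Polynomial.aeval (X (Fin.last m)) p ∈ linRel (Fin.snoc f g) := by
  intro F
  induction F using MvPolynomial.induction_on with
  | C a =>
      exact ⟨0, Polynomial.C a, by simp⟩
  | add F₁ F₂ h₁ h₂ =>
      obtain ⟨k₁, p₁, hp₁⟩ := h₁
      obtain ⟨k₂, p₂, hp₂⟩ := h₂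
      refine ⟨k₁ + k₂, Polynomial.C (g ^ k₂) * p₁ + Polynomial.C (g ^ k₁) * p₂, ?_⟩
      have heq : C (g ^ (k₁ + k₂)) * (F₁ + F₂) -
          Polynomial.aeval (X (Fin.last m))
            (Polynomial.C (g ^ k₂) * p₁ + Polynomial.C (g ^ k₁) * p₂)
          = C (g ^ k₂) * (C (g ^ k₁) * F₁ - Polynomial.aeval (X (Fin.last m)) p₁)
            + C (g ^ k₁) * (C (g ^ k₂) * F₂ - Polynomial.aeval (X (Fin.last m)) p₂) := by
        simp only [map_add, map_mul, Polynomial.aeval_C, pow_add, map_pow]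
        simp only [MvPolynomial.algebraMap_eq, map_pow]
        ring
      rw [heq]
      exact Ideal.add_mem _ (Ideal.mul_mem_left _ _ hp₁) (Ideal.mul_mem_left _ _ hp₂)
  | mul_X F i h =>
      obtain ⟨k, p, hp⟩ := h
      refine ⟨k + 1, p * Polynomial.C ((Fin.snoc f g : Fin (m+1) → R) i) * Polynomial.X, ?_⟩
      have heq : C (g ^ (k + 1)) * (F * X i) -
          Polynomial.aeval (X (Fin.last m))
            (p * Polynomial.C ((Fin.snoc f g : Fin (m+1) → R) i) * Polynomial.X)
          = (C g * X i) * (C (g ^ k) * F - Polynomial.aeval (X (Fin.last m)) p)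
            + Polynomial.aeval (X (Fin.last m)) p *
              ((C g : MvPolynomial (Fin (m+1)) R) * X i
                - C ((Fin.snoc f g : Fin (m+1) → R) i) * X (Fin.last m)) := by
        simp only [map_mul, Polynomial.aeval_C, Polynomial.aeval_X,
          MvPolynomial.algebraMap_eq, pow_succ, map_pow, map_mul]
        ring
      rw [heq]
      exact Ideal.add_mem _ (Ideal.mul_mem_left _ _ hp)
        (Ideal.mul_mem_left _ _ (relG f g i))

lemma coeff_aeval_CgX (p : Polynomial R) (n : ℕ) :
    (Polynomial.aeval (Polynomial.C g * Polynomial.X) p).coeff n = g ^ n * p.coeff n := by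
  induction p using Polynomial.induction_on' with
  | add p q hp hq => simp [hp, hq, mul_add]
  | monomial j a =>
      rw [Polynomial.aeval_monomial, mul_pow, ← Polynomial.C_pow, Polynomial.algebraMap_eq,
        ← mul_assoc, ← Polynomial.C_mul, Polynomial.coeff_C_mul_X_pow,
        Polynomial.coeff_monomial]
      by_cases h : n = j
      · subst h; simp [mul_comm]
      · simp [h, Ne.symm h]

lemma B1 (F : MvPolynomial (Fin (m + 1)) R) (hF : F ∈ reesJ (Fin.snoc f g)) :
    ∃ k : ℕ, C (g ^ k) * F ∈ linRel (Fin.snoc f g) := by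
  obtain ⟨k, p, hD⟩ := reduceB f g F
  -- image of the remainder under Ψ is zero
  have hDJ : C (g ^ k) * F - Polynomial.aeval (X (Fin.last m)) p ∈ reesJ (Fin.snoc f g) :=
    linRel_le_reesJ _ hD
  have hPsi : reesHom (Fin.snoc f g) (Polynomial.aeval (X (Fin.last m)) p) = 0 := by
    have h1 : reesHom (Fin.snoc f g) (C (g ^ k) * F) = 0 := by
      rw [map_mul]
      have : reesHom (Fin.snoc f g) F = 0 := hF
      rw [this, mul_zero]
    have h2 := hDJ
    simp only [reesJ, RingHom.mem_ker, map_sub, h1, zero_sub, neg_eq_zero] at h2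
    exact h2
  have hcomp : reesHom (Fin.snoc f g) (Polynomial.aeval (X (Fin.last m)) p)
      = Polynomial.aeval (Polynomial.C g * Polynomial.X) p := by
    have h : (reesHom (Fin.snoc f g)).comp (Polynomial.aeval (X (Fin.last m)))
        = Polynomial.aeval (Polynomial.C g * Polynomial.X) := by
      apply Polynomial.algHom_ext
      simp [reesHom_X, Fin.snoc_last]
    exact congrFun (congrArg DFunLike.coe h) p
  have hzero : ∀ n : ℕ, g ^ n * p.coeff n = 0 := by
    intro n
    have := congrArg (fun u => Polynomial.coeff u n) (hcomp ▸ hPsi)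
    simpa [coeff_aeval_CgX] using this
  refine ⟨k + p.natDegree, ?_⟩
  have hsplit : C (g ^ (k + p.natDegree)) * F
      = C (g ^ p.natDegree) * (C (g ^ k) * F - Polynomial.aeval (X (Fin.last m)) p)
        + C (g ^ p.natDegree) * Polynomial.aeval (X (Fin.last m)) p := by
    rw [pow_add, map_mul]; ring
  rw [hsplit]
  refine Ideal.add_mem _ (Ideal.mul_mem_left _ _ hD) ?_
  -- the polynomial-in-z part
  rw [show (Polynomial.aeval (X (Fin.last m)) p : MvPolynomial (Fin (m+1)) R)
      = ∑ n ∈ p.support, C (p.coeff n) * X (Fin.last m) ^ n from ?_]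
  · rw [Finset.mul_sum]
    refine Ideal.sum_mem _ fun n hn => ?_
    rcases Nat.eq_zero_or_pos n with rfl | hnpos
    · have : p.coeff 0 = 0 := by simpa using hzero 0
      simp [this]
    · obtain ⟨n', rfl⟩ : ∃ n', n = n' + 1 := ⟨n - 1, by omega⟩
      have hrel : C (g ^ n' * p.coeff (n' + 1)) * X (Fin.last m)
          ∈ linRel (Fin.snoc f g) := by
        refine relZ f g _ ?_
        have h := hzero (n' + 1)
        rw [pow_succ] at h
        linear_combination h
      have hle : n' ≤ p.natDegree := by
        have := Polynomial.le_natDegree_of_mem_supp _ hn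
        omega
      have heq : C (g ^ p.natDegree) * (C (p.coeff (n' + 1)) * X (Fin.last m) ^ (n' + 1))
          = (C (g ^ (p.natDegree - n')) * X (Fin.last m) ^ n')
            * (C (g ^ n' * p.coeff (n' + 1)) * X (Fin.last m)) := by
        rw [show g ^ p.natDegree = g ^ (p.natDegree - n') * g ^ n' by
          rw [← pow_add, Nat.sub_add_cancel hle]]
        simp only [C_mul]
        ring
      rw [heq]
      exact Ideal.mul_mem_left _ _ hrel
  · conv_lhs => rw [p.as_sum_support]
    rw [map_sum]
    refine Finset.sum_congr rfl fun n _ => ?_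
    rw [Polynomial.aeval_monomial, MvPolynomial.algebraMap_eq]

lemma Buniform [IsNoetherianRing R] :
    ∃ k : ℕ, ∀ F ∈ reesJ (Fin.snoc f g), C (g ^ k) * F ∈ linRel (Fin.snoc f g) := by
  haveI : IsNoetherianRing (MvPolynomial (Fin (m + 1)) R) := MvPolynomial.isNoetherianRing
  obtain ⟨s, hs⟩ := IsNoetherian.noetherian (reesJ (Fin.snoc f g))
  have hch : ∀ x : MvPolynomial (Fin (m + 1)) R, ∃ k : ℕ,
      x ∈ reesJ (Fin.snoc f g) → C (g ^ k) * x ∈ linRel (Fin.snoc f g) := by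
    intro x
    by_cases hx : x ∈ reesJ (Fin.snoc f g)
    · obtain ⟨k, hk⟩ := B1 f g x hx
      exact ⟨k, fun _ => hk⟩
    · exact ⟨0, fun h => absurd h hx⟩
  choose K hK using hch
  refine ⟨∑ x ∈ s, K x, ?_⟩
  intro F hF
  rw [← hs] at hF
  induction hF using Submodule.span_induction with
  | mem x hx =>
      have hxJ : x ∈ reesJ (Fin.snoc f g) := by
        rw [← hs]; exact Submodule.subset_span hx
      have hle : K x ≤ ∑ y ∈ s, K y := Finset.single_le_sum (fun _ _ => Nat.zero_le _) hx
      have : C (g ^ (∑ y ∈ s, K y)) * x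
          = C (g ^ (∑ y ∈ s, K y - K x)) * (C (g ^ K x) * x) := by
        rw [← mul_assoc, ← map_mul, ← pow_add, Nat.sub_add_cancel hle]
      rw [this]
      exact Ideal.mul_mem_left _ _ (hK x hxJ)
  | zero => simp
  | add x y _ _ hx hy => rw [mul_add]; exact Ideal.add_mem _ hx hy
  | smul a x _ hx =>
      rw [smul_eq_mul, show C (g ^ ∑ y ∈ s, K y) * (a * x)
        = a * (C (g ^ ∑ y ∈ s, K y) * x) by ring]
      exact Ideal.mul_mem_left _ _ hx

end Aux

open MvPolynomial in
/-- Let `R` be Noetherian, `I = (f₁,…,f_m)` an ideal and `g ∈ R`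
with `Iʲ : g = Iʲ` for all `j ≥ 0`.  Then there is `k > 0` with
`(C(I), gᵏ) ⊆ C((I, g))`; in particular, if `I` is of linear type (`C(I) = R`),
then `(I, g)` is of linear type. -/
theorem stmt_12 {R : Type} [CommRing R] [IsNoetherianRing R] {m : ℕ}
    (f : Fin m → R) (I : Ideal R) (hI : I = Ideal.span (Set.range f)) (g : R)
    (hreg : ∀ j : ℕ, (I ^ j).colon (Ideal.span {g}) = I ^ j) :
    (∃ k : ℕ, 0 < k ∧
      conductorIdeal f ⊔ Ideal.span {g ^ k} ≤ conductorIdeal (Fin.snoc f g)) ∧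
    (conductorIdeal f = ⊤ → conductorIdeal (Fin.snoc f g) = ⊤) := by
  obtain ⟨k, hk⟩ := Buniform f g
  have hk1 : ∀ F ∈ reesJ (Fin.snoc f g), C (g ^ (k + 1)) * F ∈ linRel (Fin.snoc f g) := by
    intro F hF
    rw [pow_succ, map_mul, mul_assoc, mul_comm (C g) F, ← mul_assoc]
    exact Ideal.mul_mem_right _ _ (hk F hF)
  have hle : conductorIdeal f ⊔ Ideal.span {g ^ (k + 1)} ≤ conductorIdeal (Fin.snoc f g) := by
    refine sup_le ?_ ?_
    · intro r hr
      rw [conductorIdeal, Submodule.mem_colon] at hr ⊢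
      intro p hp
      have hr' : ∀ p', p' ∈ reesJ f → C r * p' ∈ linRel f := by
        intro p' hp'
        have := hr p' hp'
        rwa [MvPolynomial.smul_eq_C_mul] at this
      have := mainA f g hI hreg r hr' p hp
      rwa [MvPolynomial.smul_eq_C_mul]
    · rw [Ideal.span_le]
      rintro x ⟨rfl⟩
      rw [SetLike.mem_coe, conductorIdeal, Submodule.mem_colon]
      intro p hp
      rw [MvPolynomial.smul_eq_C_mul]
      exact hk1 p hp
  refine ⟨⟨k + 1, Nat.succ_pos k, hle⟩, fun htop => ?_⟩
  rw [eq_top_iff]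
  calc (⊤ : Ideal R) = conductorIdeal f := htop.symm
    _ ≤ conductorIdeal f ⊔ Ideal.span {g ^ (k + 1)} := le_sup_left
    _ ≤ conductorIdeal (Fin.snoc f g) := hle
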